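/- Fix d ≥ 1, and let the cones C_j ⊆ ℝ^d and their translates C_j(r) be as in the context. There exists a constant K > 0, depending only on d, with the following property: for every r > 0 and all nonempty subsets U, W ⊆ {0, 1, …, d} with max U < min W, the set (⋂_{u∈U} C_u) ∩ (⋂_{w∈W} C_w(r)) is contained in the set of points at Euclidean distance at most K·r from the cell ⋂_{v ∈ U∪W} C_v(r). (In the local model of two dual subdivisions in simplicial position, an intersection of dual cells of the second kind lies in a neighbourhood, of size proportional to the translation parameter, of the lower-dimensional dual cell of the concatenated chain.) -/

import Mathlib

/-- For `x ∈ ℝ^d`, the extended coordinates `x̃₀ = 0` and `x̃ᵢ = xᵢ` for `1 ≤ i ≤ d`. -/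
def tildeCoord {d : ℕ} (x : EuclideanSpace ℝ (Fin d)) : Fin (d + 1) → ℝ :=
  Fin.cases 0 (fun i => x i)

/-- The closed cone `C_j = {x ∈ ℝ^d : x̃ᵢ ≤ x̃ⱼ for all i}` of the subdivision `Π^d`. -/
def coneCell (d : ℕ) (j : Fin (d + 1)) : Set (EuclideanSpace ℝ (Fin d)) :=
  {x | ∀ i, tildeCoord x i ≤ tildeCoord x j}

/-- The translation vector `v(r) = (-r/d, …, -r/2, -r)`. -/
noncomputable def shiftVec (d : ℕ) (r : ℝ) : EuclideanSpace ℝ (Fin d) :=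
  WithLp.toLp 2 (fun i : Fin d => -r / ((d : ℝ) - (i : ℕ)))

/-- The translated cone `C_j(r) = v(r) + C_j` of the subdivision `Π^d(r)`. -/
def coneCellShift (d : ℕ) (r : ℝ) (j : Fin (d + 1)) : Set (EuclideanSpace ℝ (Fin d)) :=
  {x | x - shiftVec d r ∈ coneCell d j}

/-- There is a constant `K > 0`, depending only on `d`, such that for
all `r > 0` and nonempty `U, W ⊆ {0, …, d}` with `max U < min W`, the intersection
`(⋂_{u ∈ U} C_u) ∩ (⋂_{w ∈ W} C_w(r))` lies within Euclidean distance `K·r` of the cell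
`⋂_{v ∈ U ∪ W} C_v(r)`. -/
theorem statement5 (d : ℕ) (hd : 1 ≤ d) :
    ∃ K > (0 : ℝ), ∀ r > (0 : ℝ),
      ∀ (U W : Finset (Fin (d + 1))) (hU : U.Nonempty) (hW : W.Nonempty),
        U.max' hU < W.min' hW →
        ∀ x ∈ (⋂ u ∈ U, coneCell d u) ∩ (⋂ w ∈ W, coneCellShift d r w),
          Metric.infDist x (⋂ v ∈ U ∪ W, coneCellShift d r v) ≤ K * r := by
  refine ⟨d, by exact_mod_cast hd.trans_lt' zero_lt_one, ?_⟩
  intro r hr U W hU hW hUW x hx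
  obtain ⟨hx1, hx2⟩ := hx
  simp only [Set.mem_iInter, coneCell, coneCellShift, Set.mem_setOf_eq] at hx1 hx2
  set z : Fin (d+1) → ℝ := fun i => tildeCoord (x - shiftVec d r) i with hzdef
  have hz0 : z 0 = 0 := by simp [hzdef, tildeCoord]
  have hzsucc : ∀ j : Fin d, z j.succ = x j + r / ((d:ℝ) - (j:ℕ)) := by
    intro j; simp [hzdef, tildeCoord, shiftVec, sub_eq_add_neg, neg_div]
  have hden : ∀ j : Fin d, (1:ℝ) ≤ (d:ℝ) - (j:ℕ) := by
    intro j
    have := j.is_lt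
    have : ((j:ℕ):ℝ) + 1 ≤ (d:ℝ) := by exact_mod_cast this
    linarith
  have hdlt : ∀ j : Fin d, 0 ≤ r / ((d:ℝ) - (j:ℕ)) ∧ r / ((d:ℝ) - (j:ℕ)) ≤ r := by
    intro j
    have h1 := hden j
    exact ⟨div_nonneg hr.le (by linarith), div_le_self hr.le h1⟩
  set w0 := W.min' hW with hw0def
  set u0 := U.max' hU with hu0def
  have hw0 : w0 ∈ W := W.min'_mem hW
  have hu0 : u0 ∈ U := U.max'_mem hU
  set N : ℝ := z w0 with hNdef
  set M : ℝ := tildeCoord x u0 with hMdef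
  have hNmax : ∀ i, z i ≤ N := hx2 w0 hw0
  have hN0 : 0 ≤ N := hz0 ▸ hNmax 0
  have hzW : ∀ w ∈ W, z w = N := fun w hw => le_antisymm (hNmax w) (hx2 w hw w0)
  have hxM : ∀ i, tildeCoord x i ≤ M := hx1 u0 hu0
  have hzUx : ∀ u ∈ U, tildeCoord x u = M := fun u hu => le_antisymm (hxM u) (hx1 u hu u0)
  -- every w ∈ W is nonzero
  have hWne0 : ∀ w ∈ W, w ≠ 0 := by
    intro w hw h0
    have h1 : w0 ≤ w := W.min'_le w hw
    have h2 : (0 : Fin (d+1)) ≤ u0 := Fin.zero_le _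
    rw [h0] at h1
    exact absurd (h2.trans_lt (hUW.trans_le h1)) (lt_irrefl _)
  -- N ≤ M + r
  have hNMr : N ≤ M + r := by
    rcases Fin.eq_zero_or_eq_succ w0 with h | ⟨j, hj⟩
    · exact absurd h (hWne0 w0 hw0)
    · have := hzsucc j
      rw [hNdef, hj, this]
      have hx' : x j ≤ M := by
        have := hxM j.succ
        simpa [tildeCoord] using this
      linarith [(hdlt j).2]
  -- z u for u ∈ U
  have hzU : ∀ u ∈ U, M ≤ z u ∧ z u ≤ M + r := by
    intro u hu
    rcases Fin.eq_zero_or_eq_succ u with h | ⟨j, hj⟩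
    · constructor
      · rw [h, hz0]
        have := hzUx u hu
        rw [h] at this
        simp [tildeCoord] at this
        rw [← this]
      · rw [h, hz0]
        have h0M : (0:ℝ) ≤ M := by
          have := hxM 0; simp [tildeCoord] at this; linarith
        linarith
    · have hxu : tildeCoord x u = M := hzUx u hu
      rw [hj] at hxu ⊢
      simp only [tildeCoord, Fin.cases_succ] at hxu
      rw [hzsucc j, hxu]
      have := hdlt j
      constructor <;> linarith [this.1, this.2]
  set T : ℝ := if (0 : Fin (d+1)) ∈ U then 0 else N with hTdef
  have hM0 : (0 : Fin (d+1)) ∈ U → M = 0 := by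
    intro h0
    have := hzUx 0 h0
    simp [tildeCoord] at this
    exact this.symm
  have hT0 : 0 ≤ T := by rw [hTdef]; split <;> simp [hN0]
  have hTNr : -r ≤ T - N := by
    rw [hTdef]; split
    · rename_i h0; have := hM0 h0; rw [this] at hNMr; linarith
    · linarith
  have hTzUW : ∀ v ∈ U ∪ W, T - z v ≤ r := by
    intro v hv
    rcases Finset.mem_union.mp hv with hv | hv
    · have := hzU v hv
      rw [hTdef]; split
      · rename_i h0; have := hM0 h0; linarith [(hzU v hv).1]
      · linarith [(hzU v hv).1]
    · rw [hzW v hv, hTdef]; split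
      · linarith
      · linarith
  -- the correction vector
  set c : Fin d → ℝ := fun j =>
    if j.succ ∈ U ∪ W then T - z j.succ else min 0 (T - z j.succ) with hcdef
  have hcbound : ∀ j, |c j| ≤ r := by
    intro j
    rw [abs_le, hcdef]
    dsimp only
    split
    · rename_i h
      exact ⟨by linarith [hTNr, hNmax j.succ], hTzUW j.succ h⟩
    · constructor
      · exact le_min (by linarith) (by linarith [hTNr, hNmax j.succ])
      · exact (min_le_left _ _).trans hr.le
  set y : EuclideanSpace ℝ (Fin d) := WithLp.toLp 2 (fun j => x j + c j) with hydef
  have hty0 : tildeCoord (y - shiftVec d r) 0 = 0 := by simp [tildeCoord]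
  have htysucc : ∀ j : Fin d, tildeCoord (y - shiftVec d r) j.succ = z j.succ + c j := by
    intro j
    rw [hzsucc j]
    show y j - shiftVec d r j = x j + r / ((d:ℝ) - (j:ℕ)) + c j
    rw [hydef]
    simp [shiftVec, sub_eq_add_neg, neg_div]
    ring
  have htyle : ∀ i, tildeCoord (y - shiftVec d r) i ≤ T := by
    intro i
    induction i using Fin.cases with
    | zero => rw [hty0]; exact hT0
    | succ j =>
      rw [htysucc j, hcdef]
      dsimp only
      split
      · linarith
      · linarith [min_le_right (0:ℝ) (T - z j.succ)]
  have htyeq : ∀ v ∈ U ∪ W, tildeCoord (y - shiftVec d r) v = T := by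
    intro v hv
    rcases Fin.eq_zero_or_eq_succ v with h | ⟨j, hj⟩
    · rw [h, hty0, hTdef]
      rcases Finset.mem_union.mp (h ▸ hv) with h0 | h0
      · simp [h0]
      · exact absurd rfl (hWne0 0 h0)
    · rw [hj, htysucc j, hcdef]
      dsimp only
      rw [if_pos (hj ▸ hv)]
      ring
  have hymem : y ∈ ⋂ v ∈ U ∪ W, coneCellShift d r v := by
    simp only [Set.mem_iInter, coneCellShift, coneCell, Set.mem_setOf_eq]
    intro v hv i
    rw [htyeq v hv]
    exact htyle i
  have hdist : dist x y ≤ (d:ℝ) * r := by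
    rw [EuclideanSpace.dist_eq]
    have hsum : ∑ j, dist (x j) (y j) ^ 2 ≤ (d:ℝ) * r ^ 2 := by
      have : ∀ j : Fin d, dist (x j) (y j) ^ 2 ≤ r ^ 2 := by
        intro j
        have h1 : dist (x j) (y j) = |c j| := by
          rw [Real.dist_eq, hydef]
          simp [abs_sub_comm]
        rw [h1]
        have := hcbound j
        nlinarith [abs_nonneg (c j)]
      calc ∑ j, dist (x j) (y j) ^ 2 ≤ ∑ _j : Fin d, r ^ 2 := Finset.sum_le_sum (fun j _ => this j)
        _ = (d:ℝ) * r ^ 2 := by simp [mul_comm]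
    calc Real.sqrt (∑ j, dist (x j) (y j) ^ 2) ≤ Real.sqrt (((d:ℝ) * r) ^ 2) := by
          apply Real.sqrt_le_sqrt
          have hd1 : (1:ℝ) ≤ (d:ℝ) := by exact_mod_cast hd
          nlinarith
      _ = (d:ℝ) * r := Real.sqrt_sq (by positivity)
  exact (Metric.infDist_le_dist_of_mem hymem).trans hdist
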